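/- For any measure-preserving system (M,μ,f) with μ a probability measure, any measurable set E with μ(E) > 0, and any t > 0, the measure of the set of points whose first hitting time to E is at most t/μ(E) satisfies μ(τ_E ≤ t/μ(E)) ≤ t + μ(E). -/
import Mathlib


open MeasureTheory

/-- Lemma (Galves–Schmitt): for a measure preserving system and a positive
measure set `E`, the set of points whose first hitting time to `E` is at most
`t / μ(E)` has measure at most `t + μ(E)`. The hitting time is
`τ_E(x) = inf {k ≥ 1 : f^k(x) ∈ E}` (with `inf ∅ = +∞`), so
`{τ_E ≤ t/μ(E)}` is the set of points hitting `E` at some time `k` with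
`1 ≤ k ≤ t/μ(E)`. -/
theorem stmt2 {M : Type*} [MeasurableSpace M] (μ : Measure M) [IsProbabilityMeasure μ]
    (f : M → M) (hfm : Measurable f) (hf : MeasurePreserving f μ μ)
    (E : Set M) (hE : MeasurableSet E) (hpos : 0 < μ E) (t : ℝ) (ht : 0 < t) :
    μ {x | ∃ k : ℕ, 1 ≤ k ∧ (k : ℝ) ≤ t / (μ E).toReal ∧ f^[k] x ∈ E}
      ≤ ENNReal.ofReal t + μ E := by
  set c := (μ E).toReal with hc
  have hfin : μ E ≠ ⊤ := (measure_lt_top μ E).ne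
  have hcpos : 0 < c := ENNReal.toReal_pos hpos.ne' hfin
  set N : ℕ := ⌊t / c⌋₊ with hN
  have hsub : {x | ∃ k : ℕ, 1 ≤ k ∧ (k : ℝ) ≤ t / c ∧ f^[k] x ∈ E}
      ⊆ ⋃ k ∈ Finset.Icc 1 N, f^[k] ⁻¹' E := by
    rintro x ⟨k, hk1, hk2, hkE⟩
    exact Set.mem_biUnion (Finset.mem_Icc.2 ⟨hk1, Nat.le_floor hk2⟩) hkE
  have hmeas : ∀ k : ℕ, μ (f^[k] ⁻¹' E) = μ E := fun k =>
    (hf.iterate k).measure_preimage hE.nullMeasurableSet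
  calc μ {x | ∃ k : ℕ, 1 ≤ k ∧ (k : ℝ) ≤ t / c ∧ f^[k] x ∈ E}
      ≤ μ (⋃ k ∈ Finset.Icc 1 N, f^[k] ⁻¹' E) := measure_mono hsub
    _ ≤ ∑ k ∈ Finset.Icc 1 N, μ (f^[k] ⁻¹' E) := measure_biUnion_finset_le _ _
    _ = N * μ E := by
        simp [hmeas, Nat.card_Icc]
    _ ≤ ENNReal.ofReal t := by
        have h1 : (N : ℝ) * c ≤ t := by
          have := Nat.floor_le (le_of_lt (div_pos ht hcpos))
          calc (N : ℝ) * c ≤ (t / c) * c := by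
                exact mul_le_mul_of_nonneg_right this hcpos.le
            _ = t := div_mul_cancel₀ t hcpos.ne'
        have : (N : ENNReal) * μ E = ENNReal.ofReal ((N : ℝ) * c) := by
          rw [ENNReal.ofReal_mul (by positivity), ENNReal.ofReal_natCast,
            hc, ENNReal.ofReal_toReal hfin]
        rw [this]
        exact ENNReal.ofReal_le_ofReal h1
    _ ≤ ENNReal.ofReal t + μ E := le_self_add
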